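/- arXiv:cs/0701113 — 3 statements merged into one kernel-verified Lean document; each statement's English description precedes it below -/
import Mathlib

section
/- Let L be an L-class in a finite semigroup S such that some H-class contained in L is a group, and let a, b ∈ L. Then ab ∈ L if and only if b lies in an H-class of L that is a group. -/
section Green

variable {S : Type*} [Semigroup S]

/-- Green's preorder `≤_L`: `a = c * b` for some `c ∈ S¹`. -/
def leL (a b : S) : Prop := a = b ∨ ∃ c, a = c * b

/-- Green's preorder `≤_R`: `a = b * c` for some `c ∈ S¹`. -/
def leR (a b : S) : Prop := a = b ∨ ∃ c, a = b * c

/-- Green's preorder `≤_J`: `a = c * b * c'` for some `c, c' ∈ S¹`. -/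
def leJ (a b : S) : Prop :=
  a = b ∨ (∃ c, a = c * b) ∨ (∃ c, a = b * c) ∨ (∃ c c', a = c * b * c')

/-- Green's relation `L`. -/
def eqL (a b : S) : Prop := leL a b ∧ leL b a

/-- Green's relation `R`. -/
def eqR (a b : S) : Prop := leR a b ∧ leR b a

/-- Green's relation `H = L ∩ R`. -/
def eqH (a b : S) : Prop := eqL a b ∧ eqR a b

/-- Green's relation `D = L ∘ R`. -/
def eqD (a b : S) : Prop := ∃ c, eqL a c ∧ eqR c b

/-- Green's relation `J`. -/
def eqJ (a b : S) : Prop := leJ a b ∧ leJ b a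

/-- `H` is an `H`-class of `S`. -/
def IsHClass (H : Set S) : Prop := ∃ a, H = {b | eqH a b}

/-- `L` is an `L`-class of `S`. -/
def IsLClass (L : Set S) : Prop := ∃ a, L = {b | eqL a b}

/-- `D` is a `D`-class of `S`. -/
def IsDClass (D : Set S) : Prop := ∃ a, D = {b | eqD a b}

/-- An `H`-class is a group if it is closed under the product and forms a
group with the induced operation. -/
def IsGroupHClass (H : Set S) : Prop :=
  (∀ a ∈ H, ∀ b ∈ H, a * b ∈ H) ∧
  ∃ e ∈ H, e * e = e ∧
    ∀ a ∈ H, e * a = a ∧ a * e = a ∧ ∃ b ∈ H, a * b = e ∧ b * a = e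

/-- A regular `D`-class: a `D`-class containing an idempotent. -/
def IsRegularDClass (D : Set S) : Prop := IsDClass D ∧ ∃ e ∈ D, e * e = e

end Green

namespace GreenAux

variable {S : Type*} [Semigroup S]

theorem leL_trans' {a b c : S} (h1 : leL a b) (h2 : leL b c) : leL a c := by
  rcases h1 with rfl | ⟨u, rfl⟩ <;> rcases h2 with rfl | ⟨v, rfl⟩
  · exact Or.inl rfl
  · exact Or.inr ⟨v, rfl⟩
  · exact Or.inr ⟨u, rfl⟩
  · exact Or.inr ⟨u * v, (mul_assoc u v c).symm⟩

theorem leR_trans' {a b c : S} (h1 : leR a b) (h2 : leR b c) : leR a c := by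
  rcases h1 with rfl | ⟨u, rfl⟩ <;> rcases h2 with rfl | ⟨v, rfl⟩
  · exact Or.inl rfl
  · exact Or.inr ⟨v, rfl⟩
  · exact Or.inr ⟨u, rfl⟩
  · exact Or.inr ⟨v * u, mul_assoc c v u⟩

theorem eqL_refl (a : S) : eqL a a := ⟨Or.inl rfl, Or.inl rfl⟩
theorem eqL_symm {a b : S} (h : eqL a b) : eqL b a := ⟨h.2, h.1⟩
theorem eqL_trans {a b c : S} (h1 : eqL a b) (h2 : eqL b c) : eqL a c :=
  ⟨leL_trans' h1.1 h2.1, leL_trans' h2.2 h1.2⟩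
theorem eqH_refl (a : S) : eqH a a :=
  ⟨⟨Or.inl rfl, Or.inl rfl⟩, ⟨Or.inl rfl, Or.inl rfl⟩⟩

/-- `pw s n = s^(n+1)`. -/
def pw (s : S) : ℕ → S
  | 0 => s
  | n+1 => s * pw s n

theorem pw_succ (s : S) (n : ℕ) : pw s (n+1) = s * pw s n := rfl

theorem pw_succ' (s : S) (n : ℕ) : pw s (n+1) = pw s n * s := by
  induction n with
  | zero => rfl
  | succ k ih =>
    show s * pw s (k+1) = pw s (k+1) * s
    conv_lhs => rw [ih]
    rw [← mul_assoc, ← pw_succ]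

theorem pw_add (s : S) (m n : ℕ) : pw s (m + n + 1) = pw s m * pw s n := by
  induction m with
  | zero => rw [Nat.zero_add, pw_succ]; rfl
  | succ k ih =>
    have : k + 1 + n + 1 = (k + n + 1) + 1 := by omega
    rw [this, pw_succ, ih, pw_succ, mul_assoc]

theorem exists_idem_core {s : S} {i j : ℕ} (hij : i < j) (h : pw s i = pw s j) :
    ∃ n, pw s n * pw s n = pw s n := by
  set p := j - i with hp
  have hp1 : 1 ≤ p := by omega
  have h' : pw s i = pw s (i + p) := by rw [show i + p = j by omega]; exact h
  have stab : ∀ m, i ≤ m → pw s m = pw s (m + p) := by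
    intro m hm
    induction m, hm using Nat.le_induction with
    | base => exact h'
    | succ m hm ih =>
      rw [show m + 1 + p = (m + p) + 1 by omega, pw_succ, pw_succ, ih]
  have stab_mul : ∀ t m, i ≤ m → pw s m = pw s (m + t * p) := by
    intro t
    induction t with
    | zero => intro m hm; simp
    | succ t ih =>
      intro m hm
      rw [show m + (t+1) * p = (m + t * p) + p by ring, ← stab (m + t * p) (by omega),
        ← ih m hm]
  have h1 : i + 1 ≤ (i+1) * p := Nat.le_mul_of_pos_right _ hp1
  set q := (i+1) * p with hq
  refine ⟨q - 1, ?_⟩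
  rw [← pw_add, show (q-1) + (q-1) + 1 = (q-1) + (i+1)*p by omega,
    ← stab_mul (i+1) (q-1) (by omega)]

theorem exists_idem [Fintype S] (s : S) : ∃ n, pw s n * pw s n = pw s n := by
  obtain ⟨i, j, hij, h⟩ := Finite.exists_ne_map_eq_of_infinite (pw s)
  rcases hij.lt_or_gt with hlt | hlt
  · exact exists_idem_core hlt h
  · exact exists_idem_core hlt h.symm

theorem idem_unit {e x : S} (he : e * e = e) (h : eqH e x) : e * x = x ∧ x * e = x := by
  obtain ⟨⟨_, hLxe⟩, ⟨_, hRxe⟩⟩ := h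
  constructor
  · rcases hRxe with rfl | ⟨c, rfl⟩
    · exact he
    · rw [← mul_assoc, he]
  · rcases hLxe with rfl | ⟨c, rfl⟩
    · exact he
    · rw [mul_assoc, he]

theorem closure {e x y : S} (he : e * e = e) (hx : eqH e x) (hy : eqH e y) :
    eqH e (x * y) := by
  obtain ⟨hex, hxe⟩ := idem_unit he hx
  obtain ⟨hey, hye⟩ := idem_unit he hy
  obtain ⟨⟨hLex, hLxe⟩, ⟨hRex, hRxe⟩⟩ := hx
  obtain ⟨⟨hLey, hLye⟩, ⟨hRey, hRye⟩⟩ := hy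
  refine ⟨⟨?_, ?_⟩, ⟨?_, ?_⟩⟩
  · rcases hLex with h | ⟨p, hp⟩
    · have hxy : x * y = y := by rw [← h, hey]
      rw [hxy]; exact hLey
    · have hy2 : y = p * (x * y) := by rw [← mul_assoc, ← hp, hey]
      exact leL_trans' hLey (Or.inr ⟨p, hy2⟩)
  · exact Or.inr ⟨x * y, by rw [mul_assoc, hye]⟩
  · rcases hRey with h | ⟨q, hq⟩
    · have hxy : x * y = x := by rw [← h, hxe]
      rw [hxy]; exact hRex
    · have hx2 : x = (x * y) * q := by rw [mul_assoc, ← hq, hxe]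
      exact leR_trans' hRex (Or.inr ⟨q, hx2⟩)
  · exact Or.inr ⟨x * y, by rw [← mul_assoc, hex]⟩

theorem hclass_group [Fintype S] {e : S} (he : e * e = e) :
    (∀ a ∈ {x : S | eqH e x}, ∀ b ∈ {x : S | eqH e x}, a * b ∈ {x : S | eqH e x}) ∧
    ∃ e' ∈ {x : S | eqH e x}, e' * e' = e' ∧
      ∀ a ∈ {x : S | eqH e x}, e' * a = a ∧ a * e' = a ∧
        ∃ b ∈ {x : S | eqH e x}, a * b = e' ∧ b * a = e' := by
  refine ⟨fun x hx y hy => closure he hx hy, e, eqH_refl e, he, fun x hx => ?_⟩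
  obtain ⟨hex, hxe⟩ := idem_unit he hx
  refine ⟨hex, hxe, ?_⟩
  have hpow : ∀ n, eqH e (pw x n) := by
    intro n
    induction n with
    | zero => exact hx
    | succ k ih => rw [pw_succ]; exact closure he hx ih
  obtain ⟨n, hn⟩ := exists_idem x
  have hg : eqH e (pw x n) := hpow n
  -- show pw x n = e
  have hge : pw x n * e = pw x n := (idem_unit he hg).2
  have hge2 : pw x n * e = e := by
    rcases hg.2.1 with h | ⟨c, hc⟩
    · rw [← h]; exact he
    · rw [hc, ← mul_assoc, hn, ← hc]
  have hgeq : pw x n = e := by rw [← hge, hge2]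
  cases n with
  | zero =>
    refine ⟨e, eqH_refl e, ?_, ?_⟩
    · have : x = e := hgeq
      rw [this, he]
    · have : x = e := hgeq
      rw [this, he]
  | succ m =>
    refine ⟨pw x m, hpow m, ?_, ?_⟩
    · rw [← pw_succ, hgeq]
    · rw [← pw_succ', hgeq]

theorem periodic_of_eq [Fintype S] {b m : S} (hm : b = m * (b * b)) :
    ∃ n, 1 ≤ n ∧ b = pw b n := by
  have hstep : ∀ n, b = pw m n * pw b (n+1) := by
    intro n
    induction n with
    | zero => exact hm
    | succ k ih =>
      have h1 : pw b (k+2) = b * b * pw b k := by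
        rw [pw_succ, pw_succ, mul_assoc]
      rw [pw_succ' m k, h1, mul_assoc (pw m k) m, ← mul_assoc m (b*b) (pw b k), ← hm,
        ← pw_succ]
      exact ih
  obtain ⟨N, hN⟩ := exists_idem m
  have hfb : pw m N * b = b := by
    conv_lhs => rw [hstep N]
    rw [← mul_assoc, hN, ← hstep N]
  refine ⟨N + 1, by omega, ?_⟩
  calc b = pw m N * pw b (N+1) := hstep N
  _ = pw m N * (b * pw b N) := by rw [pw_succ]
  _ = (pw m N * b) * pw b N := by rw [mul_assoc]
  _ = b * pw b N := by rw [hfb]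
  _ = pw b (N+1) := by rw [pw_succ]

theorem key [Fintype S] {b : S} {n : ℕ} (hn : 1 ≤ n) (hb : b = pw b n) :
    ∃ e : S, e * e = e ∧ eqH e b := by
  obtain ⟨k, rfl⟩ : ∃ k, n = k + 1 := ⟨n - 1, by omega⟩
  have period : ∀ j, pw b j = pw b (j + (k+1)) := by
    intro j
    induction j with
    | zero => rw [Nat.zero_add]; exact hb
    | succ i ih => rw [show i + 1 + (k+1) = (i + (k+1)) + 1 by omega, pw_succ, pw_succ, ih]
  refine ⟨pw b k, ?_, ?_⟩
  · rw [← pw_add, show k + k + 1 = k + (k+1) by omega, ← period]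
  · have heb : pw b k * b = b := by rw [← pw_succ', ← hb]
    have hbe : b * pw b k = b := by rw [← pw_succ, ← hb]
    refine ⟨⟨?_, Or.inr ⟨b, hbe.symm⟩⟩, ⟨?_, Or.inr ⟨b, heb.symm⟩⟩⟩
    · cases k with
      | zero => exact Or.inl rfl
      | succ j => exact Or.inr ⟨pw b j, pw_succ' b j⟩
    · cases k with
      | zero => exact Or.inl rfl
      | succ j => exact Or.inr ⟨pw b j, pw_succ b j⟩

end GreenAux


theorem product_in_Lclass_iff {S : Type*} [Semigroup S] [Fintype S]
    (Lc : Set S) (hLc : IsLClass Lc)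
    (hgrp : ∃ H : Set S, IsHClass H ∧ H ⊆ Lc ∧ IsGroupHClass H)
    (a b : S) (ha : a ∈ Lc) (hb : b ∈ Lc) :
    a * b ∈ Lc ↔ ∃ H' : Set S, IsHClass H' ∧ H' ⊆ Lc ∧ IsGroupHClass H' ∧ b ∈ H' := by
  obtain ⟨a₀, rfl⟩ := hLc
  have ha : eqL a₀ a := ha
  have hb : eqL a₀ b := hb
  constructor
  · intro hab
    have hab : eqL a₀ (a * b) := hab
    have hbab : leL b (a * b) := (GreenAux.eqL_trans (GreenAux.eqL_symm hb) hab).1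
    have haleb : leL a b := (GreenAux.eqL_trans (GreenAux.eqL_symm ha) hb).1
    -- obtain b = pw b n for some n ≥ 1
    have hkey : ∃ n, 1 ≤ n ∧ b = GreenAux.pw b n := by
      rcases hbab with h | ⟨u, hu⟩
      · rcases haleb with h' | ⟨w, hw⟩
        · -- b = a * b, a = b : b = b * b
          refine ⟨1, le_refl 1, ?_⟩
          rw [h'] at h
          exact h
        · -- b = a*b, a = w*b : b = w*(b*b)
          refine GreenAux.periodic_of_eq (m := w) ?_
          calc b = a * b := h
            _ = (w * b) * b := by rw [hw]
            _ = w * (b * b) := mul_assoc w b b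
      · rcases haleb with h' | ⟨w, hw⟩
        · -- b = u*(a*b), a = b
          exact GreenAux.periodic_of_eq (m := u) (by rw [h'] at hu; exact hu)
        · -- b = u*((w*b)*b) = (u*w)*(b*b)
          refine GreenAux.periodic_of_eq (m := u * w) ?_
          rw [hw, mul_assoc w b b, ← mul_assoc u w (b*b)] at hu
          exact hu
    obtain ⟨n, hn1, hbn⟩ := hkey
    obtain ⟨e, he, heHb⟩ := GreenAux.key hn1 hbn
    have heLb : eqL e b := heHb.1
    have heLc : eqL a₀ e := GreenAux.eqL_trans hb (GreenAux.eqL_symm heLb)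
    refine ⟨{x : S | eqH e x}, ⟨e, rfl⟩, ?_, GreenAux.hclass_group he, heHb⟩
    intro x hx
    exact GreenAux.eqL_trans heLc (hx : eqH e x).1
  · rintro ⟨H', hH', hsub, ⟨hclosed, e, heH, hee, hid⟩, hbH⟩
    have heb : e * b = b := (hid b hbH).1
    have heLc : eqL a₀ e := hsub heH
    have hea : leL e a := (GreenAux.eqL_trans (GreenAux.eqL_symm heLc) ha).1
    have hbab : leL b (a * b) := by
      rcases hea with h | ⟨v, hv⟩
      · exact Or.inl (by rw [← h]; exact heb.symm)
      · exact Or.inr ⟨v, by rw [← mul_assoc, ← hv, heb]⟩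
    exact GreenAux.eqL_trans hb ⟨hbab, Or.inr ⟨a, rfl⟩⟩
end

section
/- In a finite semigroup, Green's relations D and J coincide: a D b if and only if a J b. -/
section Aux

set_option linter.unusedSectionVars false

variable {S : Type*} [Semigroup S]

lemma withOne_cases (x : WithOne S) : x = 1 ∨ ∃ s : S, x = ↑s :=
  WithOne.cases_on x (Or.inl rfl) (fun s => Or.inr ⟨s, rfl⟩)

lemma leL_iff (a b : S) : leL a b ↔ ∃ c : WithOne S, (↑a : WithOne S) = c * ↑b := by
  constructor
  · rintro (rfl | ⟨c, rfl⟩)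
    · exact ⟨1, (one_mul _).symm⟩
    · exact ⟨↑c, by rw [WithOne.coe_mul]⟩
  · rintro ⟨c, hc⟩
    rcases withOne_cases c with rfl | ⟨s, rfl⟩
    · rw [one_mul, WithOne.coe_inj] at hc; exact Or.inl hc
    · rw [← WithOne.coe_mul, WithOne.coe_inj] at hc; exact Or.inr ⟨s, hc⟩

lemma leR_iff (a b : S) : leR a b ↔ ∃ c : WithOne S, (↑a : WithOne S) = ↑b * c := by
  constructor
  · rintro (rfl | ⟨c, rfl⟩)
    · exact ⟨1, (mul_one _).symm⟩
    · exact ⟨↑c, by rw [WithOne.coe_mul]⟩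
  · rintro ⟨c, hc⟩
    rcases withOne_cases c with rfl | ⟨s, rfl⟩
    · rw [mul_one, WithOne.coe_inj] at hc; exact Or.inl hc
    · rw [← WithOne.coe_mul, WithOne.coe_inj] at hc; exact Or.inr ⟨s, hc⟩

lemma leJ_iff (a b : S) :
    leJ a b ↔ ∃ c c' : WithOne S, (↑a : WithOne S) = c * ↑b * c' := by
  constructor
  · rintro (rfl | ⟨c, rfl⟩ | ⟨c, rfl⟩ | ⟨c, c', rfl⟩)
    · exact ⟨1, 1, by rw [one_mul, mul_one]⟩
    · exact ⟨↑c, 1, by rw [mul_one, WithOne.coe_mul]⟩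
    · exact ⟨1, ↑c, by rw [one_mul, WithOne.coe_mul]⟩
    · exact ⟨↑c, ↑c', by rw [WithOne.coe_mul, WithOne.coe_mul]⟩
  · rintro ⟨c, c', hc⟩
    rcases withOne_cases c with rfl | ⟨s, rfl⟩ <;>
      rcases withOne_cases c' with rfl | ⟨t, rfl⟩
    · rw [one_mul, mul_one, WithOne.coe_inj] at hc; exact Or.inl hc
    · rw [one_mul, ← WithOne.coe_mul, WithOne.coe_inj] at hc
      exact Or.inr (Or.inr (Or.inl ⟨t, hc⟩))
    · rw [mul_one, ← WithOne.coe_mul, WithOne.coe_inj] at hc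
      exact Or.inr (Or.inl ⟨s, hc⟩)
    · rw [← WithOne.coe_mul, ← WithOne.coe_mul, WithOne.coe_inj] at hc
      exact Or.inr (Or.inr (Or.inr ⟨s, t, hc⟩))

lemma exists_idem_pow {M : Type*} [Monoid M] [Finite M] (p : M) :
    ∃ n, 0 < n ∧ p ^ n * p ^ n = p ^ n := by
  obtain ⟨i, j, hne, hij⟩ := Finite.exists_ne_map_eq_of_infinite (fun n : ℕ => p ^ n)
  wlog h : i < j generalizing i j
  · exact this j i hne.symm hij.symm (by omega)
  set d := j - i with hd
  have hd0 : 0 < d := by omega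
  have key : ∀ m, i ≤ m → p ^ (m + d) = p ^ m := by
    intro m hm
    calc p ^ (m + d) = p ^ (m - i) * p ^ (i + d) := by rw [← pow_add]; congr 1; omega
      _ = p ^ (m - i) * p ^ i := by rw [show i + d = j by omega, ← hij]
      _ = p ^ m := by rw [← pow_add]; congr 1; omega
  have key2 : ∀ k m, i ≤ m → p ^ (m + k * d) = p ^ m := by
    intro k
    induction k with
    | zero => simp
    | succ k ih =>
        intro m hm
        rw [show m + (k+1) * d = (m + k * d) + d by ring, key _ (by omega), ih _ hm]
  refine ⟨(i + 1) * d, by positivity, ?_⟩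
  rw [← pow_add]
  exact key2 (i+1) ((i+1)*d) (by nlinarith)

lemma pump {M : Type*} [Monoid M] (A p q : M) (h : A = p * A * q) :
    ∀ n, A = p ^ n * A * q ^ n := by
  intro n
  induction n with
  | zero => simp
  | succ n ih =>
      calc A = p * A * q := h
        _ = p * (p ^ n * A * q ^ n) * q := by rw [← ih]
        _ = p ^ (n+1) * A * q ^ (n+1) := by
            rw [pow_succ' p, pow_succ q]
            simp only [mul_assoc]

end Aux

theorem eqD_iff_eqJ {S : Type*} [Semigroup S] [Fintype S] (a b : S) :
    eqD a b ↔ eqJ a b := by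
  constructor
  · rintro ⟨c, ⟨hac, hca⟩, ⟨hcb, hbc⟩⟩
    rw [leL_iff] at hac hca
    rw [leR_iff] at hcb hbc
    obtain ⟨α, hα⟩ := hac
    obtain ⟨β, hβ⟩ := hca
    obtain ⟨γ, hγ⟩ := hcb
    obtain ⟨δ, hδ⟩ := hbc
    constructor
    · rw [leJ_iff]
      exact ⟨α, γ, by rw [hα, hγ, mul_assoc]⟩
    · rw [leJ_iff]
      exact ⟨β, δ, by rw [hδ, hβ]⟩
  · rintro ⟨hab, hba⟩
    rw [leJ_iff] at hab hba
    obtain ⟨u, v, huv⟩ := hab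
    obtain ⟨x, y, hxy⟩ := hba
    haveI : Finite (WithOne S) := Finite.of_equiv (Option S) (Equiv.refl _)
    have hpq : (↑a : WithOne S) = (u * x) * ↑a * (y * v) := by
      calc (↑a : WithOne S) = u * ↑b * v := huv
        _ = u * (x * ↑a * y) * v := by rw [← hxy]
        _ = (u * x) * ↑a * (y * v) := by simp only [mul_assoc]
    obtain ⟨n, hn, hnidem⟩ := exists_idem_pow (u * x)
    obtain ⟨m, hm, hmidem⟩ := exists_idem_pow (y * v)
    have hApump := pump (↑a : WithOne S) (u * x) (y * v) hpq
    have heA : (u * x) ^ n * (↑a : WithOne S) = ↑a := by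
      conv_lhs => rw [hApump n, ← mul_assoc, ← mul_assoc, hnidem]
      exact (hApump n).symm
    have hAf : (↑a : WithOne S) * (y * v) ^ m = ↑a := by
      conv_lhs => rw [hApump m, mul_assoc ((u*x)^m * ↑a), hmidem]
      exact (hApump m).symm
    obtain ⟨c, hc⟩ : ∃ c : S, x * (↑a : WithOne S) = ↑c := by
      rcases withOne_cases x with rfl | ⟨s, rfl⟩
      · exact ⟨a, one_mul _⟩
      · exact ⟨s * a, by rw [WithOne.coe_mul]⟩
    refine ⟨c, ⟨?_, ?_⟩, ?_, ?_⟩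
    · rw [leL_iff]
      refine ⟨(u * x) ^ (n - 1) * u, ?_⟩
      rw [← hc]
      calc (↑a : WithOne S) = (u * x) ^ n * ↑a := heA.symm
        _ = (u * x) ^ (n-1) * (u * x) * ↑a := by
            rw [← pow_succ]; congr 2; omega
        _ = (u * x) ^ (n-1) * u * (x * ↑a) := by simp only [mul_assoc]
    · rw [leL_iff]
      exact ⟨x, hc.symm⟩
    · rw [leR_iff]
      refine ⟨v * (y * v) ^ (m - 1), ?_⟩
      rw [← hc, hxy]
      calc x * (↑a : WithOne S) = x * (↑a * (y * v) ^ m) := by rw [hAf]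
        _ = x * (↑a * ((y * v) * (y * v) ^ (m-1))) := by
            rw [← pow_succ']; congr 3; omega
        _ = x * ↑a * y * (v * (y * v) ^ (m-1)) := by simp only [mul_assoc]
    · rw [leR_iff]
      exact ⟨y, by rw [hxy, hc]⟩
end

section
/- In a finite semigroup S, let H be an H-class. Either for all a, b ∈ H, ab ∉ H; or for all a, b ∈ H, ab ∈ H, and in the latter case (H,·) is a group. -/
section MonoidGreen

variable {M : Type*} [Monoid M]

/-- Monoid version of `≤_L`. -/
def mleL (a b : M) : Prop := ∃ c, a = c * b

/-- Monoid version of `≤_R`. -/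
def mleR (a b : M) : Prop := ∃ c, a = b * c

/-- Monoid version of `L`. -/
def meqL (a b : M) : Prop := mleL a b ∧ mleL b a

/-- Monoid version of `R`. -/
def meqR (a b : M) : Prop := mleR a b ∧ mleR b a

/-- Monoid version of `H`. -/
def meqH (a b : M) : Prop := meqL a b ∧ meqR a b

lemma mleL.refl (a : M) : mleL a a := ⟨1, (one_mul a).symm⟩
lemma mleR.refl (a : M) : mleR a a := ⟨1, (mul_one a).symm⟩

lemma mleL.trans {a b c : M} : mleL a b → mleL b c → mleL a c := by
  rintro ⟨s, rfl⟩ ⟨t, rfl⟩; exact ⟨s * t, (mul_assoc s t c).symm⟩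

lemma mleR.trans {a b c : M} : mleR a b → mleR b c → mleR a c := by
  rintro ⟨s, rfl⟩ ⟨t, rfl⟩; exact ⟨t * s, mul_assoc c t s⟩

lemma meqH.refl (a : M) : meqH a a :=
  ⟨⟨mleL.refl a, mleL.refl a⟩, ⟨mleR.refl a, mleR.refl a⟩⟩

lemma meqH.symm {a b : M} (h : meqH a b) : meqH b a :=
  ⟨⟨h.1.2, h.1.1⟩, ⟨h.2.2, h.2.1⟩⟩

lemma meqH.trans {a b c : M} (h : meqH a b) (h' : meqH b c) : meqH a c :=
  ⟨⟨h.1.1.trans h'.1.1, h'.1.2.trans h.1.2⟩, ⟨h.2.1.trans h'.2.1, h'.2.2.trans h.2.2⟩⟩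

/-- Green's lemma, membership half, right-translation version. -/
lemma rmul_mem {a b x : M} (hv : mleR a (a * b)) (hLab : meqL a (a * b))
    (hx : meqH a x) : meqH a (x * b) := by
  obtain ⟨v, hv⟩ := hv
  obtain ⟨⟨⟨s, hs⟩, ⟨s', hs'⟩⟩, ⟨⟨u, hu⟩, ⟨t, ht⟩⟩⟩ := hx
  obtain ⟨⟨c, hc⟩, ⟨c', hc'⟩⟩ := hLab
  have hxv : x = x * b * v := calc
    x = s' * a := hs'
    _ = s' * (a * b * v) := by rw [← hv]
    _ = s' * (a * b) * v := (mul_assoc _ _ _).symm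
    _ = s' * a * b * v := by rw [← mul_assoc s' a b]
    _ = x * b * v := by rw [← hs']
  refine ⟨⟨⟨c * s, ?_⟩, ⟨s' * c', ?_⟩⟩, ⟨⟨v * u, ?_⟩, ⟨t * b, ?_⟩⟩⟩
  · calc a = c * (a * b) := hc
      _ = c * (s * x * b) := by rw [← hs]
      _ = c * (s * (x * b)) := by rw [mul_assoc s x b]
      _ = c * s * (x * b) := (mul_assoc _ _ _).symm
  · calc x * b = s' * a * b := by rw [← hs']
      _ = s' * (a * b) := mul_assoc _ _ _
      _ = s' * (c' * a) := by rw [hc']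
      _ = s' * c' * a := (mul_assoc _ _ _).symm
  · calc a = x * u := hu
      _ = x * b * v * u := by rw [← hxv]
      _ = x * b * (v * u) := mul_assoc _ _ _
  · calc x * b = a * t * b := by rw [← ht]
      _ = a * (t * b) := mul_assoc _ _ _

/-- Green's lemma, surjectivity half, right-translation version. -/
lemma rmul_surj {a b y : M} (hv : mleR a (a * b)) (hLab : meqL a (a * b))
    (hy : meqH a y) : ∃ x, meqH a x ∧ x * b = y := by
  obtain ⟨v, hv⟩ := hv
  obtain ⟨⟨⟨u, hu⟩, ⟨t, ht⟩⟩, ⟨⟨p, hp⟩, ⟨q, hq⟩⟩⟩ := hy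
  obtain ⟨⟨c, hc⟩, ⟨c', hc'⟩⟩ := hLab
  have hy_ab : y = t * c * (a * b) := calc
    y = t * a := ht
    _ = t * (c * (a * b)) := congrArg (t * ·) hc
    _ = t * c * (a * b) := (mul_assoc _ _ _).symm
  have hab_y : a * b = c' * u * y := calc
    a * b = c' * a := hc'
    _ = c' * (u * y) := congrArg (c' * ·) hu
    _ = c' * u * y := (mul_assoc _ _ _).symm
  have h1 : y * v = t * c * a := calc
    y * v = t * c * (a * b) * v := by rw [← hy_ab]
    _ = t * c * (a * b * v) := mul_assoc _ _ _
    _ = t * c * a := by rw [← hv]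
  have hx_b : y * v * b = y := calc
    y * v * b = t * c * a * b := by rw [h1]
    _ = t * c * (a * b) := mul_assoc _ _ _
    _ = y := hy_ab.symm
  refine ⟨y * v, ⟨⟨⟨c' * u, ?_⟩, ⟨t * c, h1⟩⟩, ⟨⟨b * p, ?_⟩, ⟨q * v, ?_⟩⟩⟩, hx_b⟩
  · calc a = a * b * v := hv
      _ = c' * u * y * v := by rw [hab_y]
      _ = c' * u * (y * v) := mul_assoc _ _ _
  · calc a = y * p := hp
      _ = y * v * b * p := by rw [hx_b]
      _ = y * v * (b * p) := mul_assoc _ _ _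
  · calc y * v = a * q * v := by rw [← hq]
      _ = a * (q * v) := mul_assoc _ _ _

/-- Green's lemma, membership half, left-translation version. -/
lemma lmul_mem {a b x : M} (hw : mleL b (a * b)) (hRab : meqR b (a * b))
    (hx : meqH b x) : meqH b (a * x) := by
  obtain ⟨w, hw⟩ := hw
  obtain ⟨⟨⟨t, ht⟩, ⟨t', ht'⟩⟩, ⟨⟨s, hs⟩, ⟨s', hs'⟩⟩⟩ := hx
  obtain ⟨⟨c, hc⟩, ⟨c', hc'⟩⟩ := hRab
  have hwx : x = w * (a * x) := calc
    x = b * s' := hs'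
    _ = w * (a * b) * s' := congrArg (· * s') hw
    _ = w * (a * b * s') := mul_assoc _ _ _
    _ = w * (a * (b * s')) := by rw [mul_assoc a b s']
    _ = w * (a * x) := by rw [← hs']
  refine ⟨⟨⟨t * w, ?_⟩, ⟨a * t', ?_⟩⟩, ⟨⟨s * c, ?_⟩, ⟨c' * s', ?_⟩⟩⟩
  · calc b = t * x := ht
      _ = t * (w * (a * x)) := congrArg (t * ·) hwx
      _ = t * w * (a * x) := (mul_assoc _ _ _).symm
  · calc a * x = a * (t' * b) := congrArg (a * ·) ht'
      _ = a * t' * b := (mul_assoc _ _ _).symm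
  · calc b = a * b * c := hc
      _ = a * (x * s) * c := by rw [← hs]
      _ = a * x * s * c := by rw [← mul_assoc a x s]
      _ = a * x * (s * c) := mul_assoc _ _ _
  · calc a * x = a * (b * s') := congrArg (a * ·) hs'
      _ = a * b * s' := (mul_assoc _ _ _).symm
      _ = b * c' * s' := by rw [hc']
      _ = b * (c' * s') := mul_assoc _ _ _

/-- Green's lemma, surjectivity half, left-translation version. -/
lemma lmul_surj {a b y : M} (hw : mleL b (a * b)) (hRab : meqR b (a * b))
    (hy : meqH b y) : ∃ x, meqH b x ∧ a * x = y := by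
  obtain ⟨w, hw⟩ := hw
  obtain ⟨⟨⟨p, hp⟩, ⟨q, hq⟩⟩, ⟨⟨u, hu⟩, ⟨t, ht⟩⟩⟩ := hy
  obtain ⟨⟨c, hc⟩, ⟨c', hc'⟩⟩ := hRab
  have hy_ab : y = a * b * (c * t) := calc
    y = b * t := ht
    _ = a * b * c * t := congrArg (· * t) hc
    _ = a * b * (c * t) := mul_assoc _ _ _
  have hab_y : a * b = y * (u * c') := calc
    a * b = b * c' := hc'
    _ = y * u * c' := congrArg (· * c') hu
    _ = y * (u * c') := mul_assoc _ _ _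
  have hwy : w * y = b * (c * t) := calc
    w * y = w * (a * b * (c * t)) := congrArg (w * ·) hy_ab
    _ = w * (a * b) * (c * t) := (mul_assoc _ _ _).symm
    _ = b * (c * t) := by rw [← hw]
  have haw : a * (w * y) = y := calc
    a * (w * y) = a * (b * (c * t)) := congrArg (a * ·) hwy
    _ = a * b * (c * t) := (mul_assoc _ _ _).symm
    _ = y := hy_ab.symm
  refine ⟨w * y, ⟨⟨⟨p * a, ?_⟩, ⟨w * q, ?_⟩⟩, ⟨⟨u * c', ?_⟩, ⟨c * t, hwy⟩⟩⟩, haw⟩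
  · calc b = p * y := hp
      _ = p * (a * (w * y)) := congrArg (p * ·) haw.symm
      _ = p * a * (w * y) := (mul_assoc _ _ _).symm
  · calc w * y = w * (q * b) := congrArg (w * ·) hq
      _ = w * q * b := (mul_assoc _ _ _).symm
  · calc b = w * (a * b) := hw
      _ = w * (y * (u * c')) := congrArg (w * ·) hab_y
      _ = w * y * (u * c') := (mul_assoc _ _ _).symm

/-- Green's theorem for a monoid `M`: if `a` and `b` are `H`-equivalent
and `a * b` is in the same `H`-class, then the `H`-class is closed under
the product and is a group. -/
theorem monoid_green {a b : M} (hb : meqH a b) (hab : meqH a (a * b)) :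
    (∀ x, meqH a x → ∀ y, meqH a y → meqH a (x * y)) ∧
    ∃ e, meqH a e ∧ e * e = e ∧ ∀ x, meqH a x →
      e * x = x ∧ x * e = x ∧ ∃ z, meqH a z ∧ x * z = e ∧ z * x = e := by
  have key1 : ∀ x, meqH a x → meqH a (x * b) := fun x hx => rmul_mem hab.2.1 hab.1 hx
  have closure : ∀ x, meqH a x → ∀ y, meqH a y → meqH a (x * y) := by
    intro x hx y hy
    have h1 : meqH b (x * b) := (hb.symm).trans (key1 x hx)
    exact hb.trans (lmul_mem h1.1.1 h1.2 ((hb.symm).trans hy))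
  have xH_surj : ∀ x, meqH a x → ∀ y, meqH a y → ∃ z, meqH a z ∧ x * z = y := by
    intro x hx y hy
    have h1 : meqH b (x * b) := (hb.symm).trans (key1 x hx)
    obtain ⟨z, hz, hzz⟩ := lmul_surj h1.1.1 h1.2 ((hb.symm).trans hy)
    exact ⟨z, hb.trans hz, hzz⟩
  have Hx_surj : ∀ x, meqH a x → ∀ y, meqH a y → ∃ z, meqH a z ∧ z * x = y := by
    intro x hx y hy
    have hax : meqH a (a * x) := closure a (meqH.refl a) x hx
    exact rmul_surj hax.2.1 hax.1 hy
  refine ⟨closure, ?_⟩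
  obtain ⟨e, he, hae⟩ := xH_surj a (meqH.refl a) a (meqH.refl a)
  obtain ⟨f, hf, hfa⟩ := Hx_surj a (meqH.refl a) a (meqH.refl a)
  have hre : ∀ y, meqH a y → y * e = y := by
    intro y hy
    obtain ⟨z, _, hzy⟩ := Hx_surj a (meqH.refl a) y hy
    rw [← hzy, mul_assoc, hae]
  have hlf : ∀ y, meqH a y → f * y = y := by
    intro y hy
    obtain ⟨z, _, hzy⟩ := xH_surj a (meqH.refl a) y hy
    rw [← hzy, ← mul_assoc, hfa]
  have hef : e = f := by
    have h1 := hre f hf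
    have h2 := hlf e he
    rw [← h2, h1]
  have hle : ∀ y, meqH a y → e * y = y := fun y hy => by rw [hef]; exact hlf y hy
  refine ⟨e, he, hre e he, ?_⟩
  intro x hx
  obtain ⟨r, hr, hxr⟩ := xH_surj x hx e he
  obtain ⟨l, hl, hlx⟩ := Hx_surj x hx e he
  have hrl : l = r := by
    have h1 : l * (x * r) = l * e := congrArg (l * ·) hxr
    rw [← mul_assoc, hlx, hle r hr, hre l hl] at h1
    exact h1.symm
  exact ⟨hle x hx, hre x hx, r, hr, hxr, by rw [← hrl]; exact hlx⟩

end MonoidGreen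

section Transfer

variable {S : Type*} [Semigroup S]

lemma coe_leL {a b : S} : leL a b ↔ mleL (a : WithOne S) (b : WithOne S) := by
  constructor
  · rintro (rfl | ⟨c, rfl⟩)
    · exact ⟨1, (one_mul _).symm⟩
    · exact ⟨(c : WithOne S), WithOne.coe_mul c b⟩
  · rintro ⟨c, hc⟩
    induction c using WithOne.cases_on
    · left
      rw [one_mul] at hc
      exact WithOne.coe_inj.mp hc
    · next s =>
      intro hc
      right
      refine ⟨a, WithOne.coe_inj.mp ?_⟩
      rw [WithOne.coe_mul]; exact hc

lemma coe_leR {a b : S} : leR a b ↔ mleR (a : WithOne S) (b : WithOne S) := by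
  constructor
  · rintro (rfl | ⟨c, rfl⟩)
    · exact ⟨1, (mul_one _).symm⟩
    · exact ⟨(c : WithOne S), WithOne.coe_mul b c⟩
  · rintro ⟨c, hc⟩
    induction c using WithOne.cases_on
    · left
      rw [mul_one] at hc
      exact WithOne.coe_inj.mp hc
    · next s =>
      intro hc
      right
      refine ⟨a, WithOne.coe_inj.mp ?_⟩
      rw [WithOne.coe_mul]; exact hc

lemma coe_eqH {a b : S} : eqH a b ↔ meqH (a : WithOne S) (b : WithOne S) :=
  ⟨fun h => ⟨⟨coe_leL.mp h.1.1, coe_leL.mp h.1.2⟩, ⟨coe_leR.mp h.2.1, coe_leR.mp h.2.2⟩⟩,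
   fun h => ⟨⟨coe_leL.mpr h.1.1, coe_leL.mpr h.1.2⟩, ⟨coe_leR.mpr h.2.1, coe_leR.mpr h.2.2⟩⟩⟩

lemma mem_coe {a : S} {z : WithOne S} (h : meqH (a : WithOne S) z) : ∃ s : S, z = (s : WithOne S) := by
  obtain ⟨c, hc⟩ := h.1.2
  induction c using WithOne.cases_on
  · rw [one_mul] at hc
    exact ⟨a, hc⟩
  · next s =>
    intro hc
    exact ⟨a * s, by rw [hc, WithOne.coe_mul]⟩

end Transfer

theorem Hclass_dichotomy {S : Type*} [Semigroup S] [Fintype S]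
    (H : Set S) (hH : IsHClass H) :
    (∀ a ∈ H, ∀ b ∈ H, a * b ∉ H) ∨
    ((∀ a ∈ H, ∀ b ∈ H, a * b ∈ H) ∧ IsGroupHClass H) := by
  obtain ⟨a₀, rfl⟩ := hH
  by_cases hcase : ∃ a ∈ {b | eqH a₀ b}, ∃ b ∈ {b | eqH a₀ b}, a * b ∈ {b | eqH a₀ b}
  · obtain ⟨a, ha, b, hb, hab⟩ := hcase
    right
    have Ha : meqH (a₀ : WithOne S) (a : WithOne S) := coe_eqH.mp ha
    have Hb' : meqH (a₀ : WithOne S) (b : WithOne S) := coe_eqH.mp hb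
    have Hab : meqH (a₀ : WithOne S) ((a : WithOne S) * (b : WithOne S)) := by
      have h := coe_eqH.mp hab
      rwa [WithOne.coe_mul] at h
    have hmb : meqH (a : WithOne S) (b : WithOne S) := Ha.symm.trans Hb'
    have hmab : meqH (a : WithOne S) ((a : WithOne S) * (b : WithOne S)) := Ha.symm.trans Hab
    obtain ⟨clos, e, he, hee, hgrp⟩ := monoid_green hmb hmab
    have memH : ∀ x : S, x ∈ {b | eqH a₀ b} ↔ meqH (a : WithOne S) (x : WithOne S) := by
      intro x
      exact ⟨fun hx => Ha.symm.trans (coe_eqH.mp hx), fun hx => coe_eqH.mpr (Ha.trans hx)⟩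
    have closS : ∀ x ∈ {b | eqH a₀ b}, ∀ y ∈ {b | eqH a₀ b}, x * y ∈ {b | eqH a₀ b} := by
      intro x hx y hy
      have h := clos _ ((memH x).mp hx) _ ((memH y).mp hy)
      rw [← WithOne.coe_mul] at h
      exact (memH _).mpr h
    obtain ⟨e', rfl⟩ := mem_coe he
    refine ⟨closS, closS, e', (memH e').mpr he,
      WithOne.coe_inj.mp (by rw [WithOne.coe_mul]; exact hee), ?_⟩
    intro x hx
    obtain ⟨h1, h2, z, hz, hz1, hz2⟩ := hgrp (x : WithOne S) ((memH x).mp hx)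
    obtain ⟨z', rfl⟩ := mem_coe hz
    exact ⟨WithOne.coe_inj.mp (by rw [WithOne.coe_mul]; exact h1),
      WithOne.coe_inj.mp (by rw [WithOne.coe_mul]; exact h2),
      z', (memH z').mpr hz,
      WithOne.coe_inj.mp (by rw [WithOne.coe_mul]; exact hz1),
      WithOne.coe_inj.mp (by rw [WithOne.coe_mul]; exact hz2)⟩
  · left
    intro x hx y hy hxy
    exact hcase ⟨x, hx, y, hy, hxy⟩
end
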